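/- For every finite simple graph G = (V, E) and every fractional matching x of G, the vector (2/3)·x lies in the matching polytope of G. Consequently, for any profits c_e ≥ 0 there exists a matching M of G with Σ_{e ∈ M} c_e ≥ (2/3) Σ_{e ∈ E} c_e x_e. -/

import Mathlib

open Finset

lemma three_coloring {V : Type*} [DecidableEq V] (P : Finset (V × V))
    (hfun : ∀ p ∈ P, ∀ q ∈ P, p.1 = q.1 → p = q)
    (hinj : ∀ p ∈ P, ∀ q ∈ P, p.2 = q.2 → p = q) :
    ∃ col : V × V → Fin 3, ∀ p ∈ P, ∀ q ∈ P, p ≠ q → col p = col q →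
      p.1 ≠ q.1 ∧ p.1 ≠ q.2 ∧ p.2 ≠ q.1 ∧ p.2 ≠ q.2 := by
  induction P using Finset.strongInduction with
  | _ P ih =>
    rcases P.eq_empty_or_nonempty with rfl | ⟨p, hp⟩
    · exact ⟨fun _ => 0, by simp⟩
    · obtain ⟨col, hcol⟩ := ih (P.erase p) (Finset.erase_ssubset hp)
        (fun a ha b hb => hfun a (mem_of_mem_erase ha) b (mem_of_mem_erase hb))
        (fun a ha b hb => hinj a (mem_of_mem_erase ha) b (mem_of_mem_erase hb))
      set Conf := (P.erase p).filter (fun q => q.2 = p.1 ∨ q.1 = p.2) with hConf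
      have hConfcard : Conf.card ≤ 2 := by
        have h1 : Conf ⊆ (P.erase p).filter (fun q => q.2 = p.1) ∪
            (P.erase p).filter (fun q => q.1 = p.2) := by
          intro q hq
          simp only [hConf, mem_filter] at hq
          rcases hq.2 with h | h
          · exact Finset.mem_union_left _ (mem_filter.2 ⟨hq.1, h⟩)
          · exact Finset.mem_union_right _ (mem_filter.2 ⟨hq.1, h⟩)
        refine (Finset.card_le_card h1).trans ((Finset.card_union_le _ _).trans ?_)
        have c1 : ((P.erase p).filter (fun q => q.2 = p.1)).card ≤ 1 := by
          rw [Finset.card_le_one]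
          intro a ha b hb
          simp only [mem_filter] at ha hb
          exact hinj a (mem_of_mem_erase ha.1) b (mem_of_mem_erase hb.1)
            (ha.2.trans hb.2.symm)
        have c2 : ((P.erase p).filter (fun q => q.1 = p.2)).card ≤ 1 := by
          rw [Finset.card_le_one]
          intro a ha b hb
          simp only [mem_filter] at ha hb
          exact hfun a (mem_of_mem_erase ha.1) b (mem_of_mem_erase hb.1)
            (ha.2.trans hb.2.symm)
        omega
      obtain ⟨k, hk⟩ : ∃ k : Fin 3, k ∉ Conf.image col := by
        by_contra h
        push_neg at h
        have : (Finset.univ : Finset (Fin 3)) ⊆ Conf.image col := fun k _ => h k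
        have := (Finset.card_le_card this).trans (Finset.card_image_le.trans hConfcard)
        simp at this
      refine ⟨Function.update col p k, ?_⟩
      intro a ha b hb hab hcab
      -- helper for the asymmetric case
      have main : ∀ q ∈ P.erase p, col q = k →
          p.1 ≠ q.1 ∧ p.1 ≠ q.2 ∧ p.2 ≠ q.1 ∧ p.2 ≠ q.2 := by
        intro q hq hcq
        have hqP := mem_of_mem_erase hq
        have hqne : q ≠ p := Finset.ne_of_mem_erase hq
        have hnconf : q ∉ Conf := by
          intro hmem
          exact hk (hcq ▸ Finset.mem_image_of_mem col hmem)
        simp only [hConf, Finset.mem_filter, not_and_or, not_or] at hnconf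
        have hnc : ¬(q.2 = p.1) ∧ ¬(q.1 = p.2) := by tauto
        refine ⟨?_, ?_, ?_, ?_⟩
        · intro h; exact hqne (hfun q hqP p hp h.symm)
        · intro h; exact hnc.1 h.symm
        · intro h; exact hnc.2 h.symm
        · intro h; exact hqne (hinj q hqP p hp h.symm)
      by_cases hap : a = p
      · subst hap
        have hbP : b ∈ P.erase a := Finset.mem_erase.2 ⟨fun h => hab h.symm, hb⟩
        have hcb : col b = k := by
          have h1 : Function.update col a k a = k := Function.update_self _ _ _
          have h2 : Function.update col a k b = col b :=
            Function.update_of_ne (fun h => hab h.symm) _ _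
          rw [h1, h2] at hcab; exact hcab.symm
        exact main b hbP hcb
      · by_cases hbp : b = p
        · subst hbp
          have haP : a ∈ P.erase b := Finset.mem_erase.2 ⟨hap, ha⟩
          have hca : col a = k := by
            have h1 : Function.update col b k b = k := Function.update_self _ _ _
            have h2 : Function.update col b k a = col a := Function.update_of_ne hap _ _
            rw [h1, h2] at hcab; exact hcab
          obtain ⟨h1, h2, h3, h4⟩ := main a haP hca
          exact ⟨fun h => h1 h.symm, fun h => h3 h.symm, fun h => h2 h.symm, fun h => h4 h.symm⟩
        · have haP : a ∈ P.erase p := Finset.mem_erase.2 ⟨hap, ha⟩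
          have hbP : b ∈ P.erase p := Finset.mem_erase.2 ⟨hbp, hb⟩
          have : col a = col b := by
            have h1 : Function.update col p k a = col a := Function.update_of_ne hap _ _
            have h2 : Function.update col p k b = col b := Function.update_of_ne hbp _ _
            rw [h1, h2] at hcab; exact hcab
          exact hcol a haP b hbP hab this

lemma exists_matching_third {V : Type*} [Fintype V] [DecidableEq V]
    (G : SimpleGraph V) [DecidableRel G.Adj]
    (c : Sym2 V → ℝ) (P : Finset (V × V))
    (hadj : ∀ p ∈ P, G.Adj p.1 p.2)
    (hcol3 : ∃ col : V × V → Fin 3, ∀ p ∈ P, ∀ q ∈ P, p ≠ q → col p = col q →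
      p.1 ≠ q.1 ∧ p.1 ≠ q.2 ∧ p.2 ≠ q.1 ∧ p.2 ≠ q.2) :
    ∃ M : Finset (Sym2 V), M ⊆ G.edgeFinset ∧
      (∀ e ∈ M, ∀ f ∈ M, e ≠ f → ∀ v : V, v ∈ e → v ∉ f) ∧
      ∑ p ∈ P, c s(p.1, p.2) ≤ 3 * ∑ e ∈ M, c e := by
  obtain ⟨col, hcol⟩ := hcol3
  have htotal : ∑ i : Fin 3, ∑ p ∈ P.filter (fun p => col p = i), c s(p.1, p.2)
      = ∑ p ∈ P, c s(p.1, p.2) := Finset.sum_fiberwise _ _ _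
  obtain ⟨i, -, hi⟩ : ∃ i ∈ (univ : Finset (Fin 3)),
      (∑ p ∈ P, c s(p.1, p.2)) / 3 ≤ ∑ p ∈ P.filter (fun p => col p = i), c s(p.1, p.2) := by
    apply Finset.exists_le_of_sum_le ⟨0, mem_univ 0⟩
    rw [htotal]
    simp [Finset.sum_const]
    ring_nf
    norm_num
  set Q := P.filter (fun p => col p = i) with hQ
  have hQsub : Q ⊆ P := Finset.filter_subset _ _
  have hdisj : ∀ p ∈ Q, ∀ q ∈ Q, p ≠ q →
      p.1 ≠ q.1 ∧ p.1 ≠ q.2 ∧ p.2 ≠ q.1 ∧ p.2 ≠ q.2 := by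
    intro p hp q hq hne
    have hcp := (mem_filter.1 hp).2
    have hcq := (mem_filter.1 hq).2
    exact hcol p (hQsub hp) q (hQsub hq) hne (hcp.trans hcq.symm)
  refine ⟨Q.image (fun p => s(p.1, p.2)), ?_, ?_, ?_⟩
  · intro e he
    obtain ⟨p, hp, rfl⟩ := Finset.mem_image.1 he
    rw [SimpleGraph.mem_edgeFinset]
    exact (hadj p (hQsub hp) : G.Adj p.1 p.2)
  · intro e he f hf hef v hve hvf
    obtain ⟨p, hp, rfl⟩ := Finset.mem_image.1 he
    obtain ⟨q, hq, rfl⟩ := Finset.mem_image.1 hf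
    have hpq : p ≠ q := fun h => hef (by rw [h])
    obtain ⟨h1, h2, h3, h4⟩ := hdisj p hp q hq hpq
    rw [Sym2.mem_iff] at hve hvf
    rcases hve with rfl | rfl <;> rcases hvf with h | h <;> tauto
  · have hsum : ∑ e ∈ Q.image (fun p => s(p.1, p.2)), c e = ∑ p ∈ Q, c s(p.1, p.2) := by
      apply Finset.sum_image
      intro p hp q hq hpq
      by_contra hne
      obtain ⟨h1, h2, -, -⟩ := hdisj p hp q hq hne
      have : p.1 ∈ s(q.1, q.2) := by rw [← show s(p.1, p.2) = s(q.1, q.2) from hpq]; exact Sym2.mem_mk_left _ _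
      rw [Sym2.mem_iff] at this
      tauto
    rw [hsum]
    linarith

lemma double_count {V : Type*} [Fintype V] [DecidableEq V] (G : SimpleGraph V) [DecidableRel G.Adj] (f : Sym2 V → ℝ) :
    ∑ u : V, ∑ v : V, (if G.Adj u v then f s(u, v) else 0)
      = 2 * ∑ e ∈ G.edgeFinset, f e := by
  classical
  rw [← Finset.sum_product']
  rw [show (∑ p ∈ (univ ×ˢ univ : Finset (V × V)), if G.Adj p.1 p.2 then f s(p.1, p.2) else 0)
      = ∑ p ∈ (univ ×ˢ univ : Finset (V × V)).filter (fun p => G.Adj p.1 p.2), f s(p.1, p.2)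
    from (Finset.sum_filter _ _).symm]
  rw [← Finset.sum_fiberwise_of_maps_to (g := fun p : V × V => s(p.1, p.2))
    (t := G.edgeFinset) (fun p hp => by
      rw [SimpleGraph.mem_edgeFinset]
      exact (Finset.mem_filter.1 hp).2)]
  rw [Finset.mul_sum]
  refine Finset.sum_congr rfl ?_
  intro e he
  induction e with
  | _ a b =>
    have hadj : G.Adj a b := by rwa [SimpleGraph.mem_edgeFinset, SimpleGraph.mem_edgeSet] at he
    have hne : a ≠ b := hadj.ne
    have hfib : ((univ ×ˢ univ : Finset (V × V)).filter (fun p => G.Adj p.1 p.2)).filter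
        (fun p => s(p.1, p.2) = s(a, b)) = {(a, b), (b, a)} := by
      ext p
      simp only [Finset.mem_filter, Finset.mem_product, Finset.mem_univ, true_and,
        Finset.mem_insert, Finset.mem_singleton, Sym2.eq_iff]
      constructor
      · rintro ⟨-, (⟨h1, h2⟩ | ⟨h1, h2⟩)⟩
        · left; exact Prod.ext h1 h2
        · right; exact Prod.ext h1 h2
      · rintro (rfl | rfl)
        · exact ⟨hadj, Or.inl ⟨rfl, rfl⟩⟩
        · exact ⟨hadj.symm, Or.inr ⟨rfl, rfl⟩⟩
    rw [hfib]
    have hsum : ∑ p ∈ ({(a, b), (b, a)} : Finset (V × V)), f s(p.1, p.2)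
        = f s(a, b) + f s(b, a) := by
      rw [Finset.sum_insert (by simp [Prod.ext_iff, hne]), Finset.sum_singleton]
    rw [hsum, Sym2.eq_swap]
    ring

lemma row_sum_eq {V : Type*} [Fintype V] [DecidableEq V] (G : SimpleGraph V) [DecidableRel G.Adj]
    (x : {e : Sym2 V // e ∈ G.edgeFinset} → ℝ) (u : V) :
    ∑ v : V, (if h : G.Adj u v then
        x ⟨s(u, v), by rw [SimpleGraph.mem_edgeFinset, SimpleGraph.mem_edgeSet]; exact h⟩ else 0)
      = ∑ e : {e : Sym2 V // e ∈ G.edgeFinset}, (if u ∈ e.1 then x e else 0) := by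
  classical
  rw [show (∑ e : {e : Sym2 V // e ∈ G.edgeFinset}, (if u ∈ e.1 then x e else 0))
      = ∑ e ∈ (univ : Finset {e : Sym2 V // e ∈ G.edgeFinset}).filter (fun e => u ∈ e.1), x e
    from (Finset.sum_filter _ _).symm]
  rw [show (∑ v : V, (if h : G.Adj u v then
        x ⟨s(u, v), by rw [SimpleGraph.mem_edgeFinset, SimpleGraph.mem_edgeSet]; exact h⟩ else 0))
      = ∑ v ∈ (univ : Finset V).filter (fun v => G.Adj u v), (if h : G.Adj u v then
        x ⟨s(u, v), by rw [SimpleGraph.mem_edgeFinset, SimpleGraph.mem_edgeSet]; exact h⟩ else 0)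
    from (Finset.sum_filter_of_ne (fun v _ hne => by
      by_contra hadj
      exact hne (dif_neg hadj))).symm]
  refine Finset.sum_bij (fun v hv => (⟨s(u, v), by
      rw [SimpleGraph.mem_edgeFinset, SimpleGraph.mem_edgeSet]
      exact (Finset.mem_filter.1 hv).2⟩ : {e : Sym2 V // e ∈ G.edgeFinset})) ?_ ?_ ?_ ?_
  · intro v hv
    simp only [Finset.mem_filter, Finset.mem_univ, true_and]
    exact Sym2.mem_mk_left u v
  · intro v1 h1 v2 h2 heq
    have h2 := congrArg Subtype.val heq
    simp only at h2
    rcases Sym2.eq_iff.1 h2 with ⟨-, h⟩ | ⟨ha, hb⟩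
    · exact h
    · rw [hb, ha]
  · intro b hb
    have hub : u ∈ b.1 := (Finset.mem_filter.1 hb).2
    have hspec := Sym2.other_spec hub
    have hadj : G.Adj u (Sym2.Mem.other hub) := by
      rw [← SimpleGraph.mem_edgeSet, ← SimpleGraph.mem_edgeFinset]
      rw [hspec]; exact b.2
    refine ⟨Sym2.Mem.other hub, Finset.mem_filter.2 ⟨Finset.mem_univ _, hadj⟩, ?_⟩
    exact Subtype.ext hspec
  · intro v hv
    have hadj : G.Adj u v := (Finset.mem_filter.1 hv).2
    rw [dif_pos hadj]

lemma key_lemma {V : Type*} [Fintype V] [DecidableEq V] (G : SimpleGraph V) [DecidableRel G.Adj]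
    (x : {e : Sym2 V // e ∈ G.edgeFinset} → ℝ)
    (hx0 : ∀ e, 0 ≤ x e)
    (hxdeg : ∀ v : V,
      ∑ e : {e : Sym2 V // e ∈ G.edgeFinset}, (if v ∈ e.1 then x e else 0) ≤ 1)
    (c : Sym2 V → ℝ) :
    ∃ M : Finset (Sym2 V), M ⊆ G.edgeFinset ∧
      (∀ e ∈ M, ∀ f ∈ M, e ≠ f → ∀ v : V, v ∈ e → v ∉ f) ∧
      (2 / 3) * ∑ e : {e : Sym2 V // e ∈ G.edgeFinset}, c e.1 * x e ≤ ∑ e ∈ M, c e := by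
  classical
  set A : Matrix V V ℝ := fun u v => if h : G.Adj u v then
      x ⟨s(u, v), by rw [SimpleGraph.mem_edgeFinset, SimpleGraph.mem_edgeSet]; exact h⟩ else 0
    with hAdef
  have hA0 : ∀ u v, 0 ≤ A u v := by
    intro u v
    simp only [hAdef]
    split
    · exact hx0 _
    · exact le_refl 0
  have hAadj : ∀ u v, A u v ≠ 0 → G.Adj u v := by
    intro u v h
    by_contra hadj
    exact h (by simp only [hAdef]; rw [dif_neg hadj])
  have hAsymm : ∀ u v, A u v = A v u := by
    intro u v
    simp only [hAdef]
    by_cases h : G.Adj u v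
    · rw [dif_pos h, dif_pos h.symm]
      congr 1
      exact Subtype.ext (Sym2.eq_swap)
    · rw [dif_neg h, dif_neg (fun h' => h h'.symm)]
  have hrow : ∀ u, ∑ v, A u v
      = ∑ e : {e : Sym2 V // e ∈ G.edgeFinset}, (if u ∈ e.1 then x e else 0) := by
    intro u
    exact row_sum_eq G x u
  have hrow1 : ∀ u, ∑ v, A u v ≤ 1 := fun u => (hrow u) ▸ hxdeg u
  have hcolsum : ∀ v, ∑ u, A u v = ∑ w, A v w :=
    fun v => Finset.sum_congr rfl (fun u _ => hAsymm u v)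
  -- the padded doubly stochastic matrix
  set B : Matrix (V ⊕ V) (V ⊕ V) ℝ := fun i j =>
    match i, j with
    | Sum.inl u, Sum.inl v => if u = v then 1 - ∑ w, A u w else 0
    | Sum.inl u, Sum.inr v => A u v
    | Sum.inr u, Sum.inl v => A u v
    | Sum.inr u, Sum.inr v => if u = v then 1 - ∑ w, A u w else 0
    with hBdef
  have hB : B ∈ doublyStochastic ℝ (V ⊕ V) := by
    rw [mem_doublyStochastic_iff_sum]
    refine ⟨?_, ?_, ?_⟩
    · rintro (u | u) (v | v) <;> simp only [hBdef]
      · split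
        · linarith [hrow1 u]
        · exact le_refl 0
      · exact hA0 u v
      · exact hA0 u v
      · split
        · linarith [hrow1 u]
        · exact le_refl 0
    · rintro (u | u) <;>
        simp only [hBdef, Fintype.sum_sum_type] <;>
        rw [Finset.sum_ite_eq (univ : Finset V) u (fun _ => 1 - ∑ w, A u w)] <;>
        simp <;> ring
    · rintro (v | v) <;>
        simp only [hBdef, Fintype.sum_sum_type]
      · rw [Finset.sum_ite_eq' (univ : Finset V) v (fun u => 1 - ∑ w, A u w)]
        rw [hcolsum v]
        simp
      · rw [Finset.sum_ite_eq' (univ : Finset V) v (fun u => 1 - ∑ w, A u w)]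
        rw [hcolsum v]
        simp
  -- Birkhoff
  obtain ⟨w, hw0, hw1, hwB⟩ := exists_eq_sum_perm_of_mem_doublyStochastic hB
  -- the linear functional
  set coef : V → V → ℝ := fun u v => if G.Adj u v then c s(u, v) else 0 with hcoefdef
  set L : Matrix (V ⊕ V) (V ⊕ V) ℝ →ₗ[ℝ] ℝ :=
    { toFun := fun N => ∑ u : V, ∑ v : V, coef u v * N (Sum.inl u) (Sum.inr v)
      map_add' := by
        intro N1 N2
        simp [Matrix.add_apply, mul_add, Finset.sum_add_distrib]
      map_smul' := by
        intro r N
        dsimp only [RingHom.id_apply]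
        rw [smul_eq_mul, Finset.mul_sum]
        refine Finset.sum_congr rfl fun u _ => ?_
        rw [Finset.mul_sum]
        refine Finset.sum_congr rfl fun v _ => ?_
        rw [Matrix.smul_apply, smul_eq_mul]
        ring } with hLdef
  have hLB : L B = 2 * ∑ e : {e : Sym2 V // e ∈ G.edgeFinset}, c e.1 * x e := by
    set f : Sym2 V → ℝ := fun e => if h : e ∈ G.edgeFinset then c e * x ⟨e, h⟩ else 0 with hfdef
    have h1 : L B = ∑ u : V, ∑ v : V, (if G.Adj u v then f s(u, v) else 0) := by
      simp only [hLdef, LinearMap.coe_mk, AddHom.coe_mk]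
      refine Finset.sum_congr rfl fun u _ => Finset.sum_congr rfl fun v _ => ?_
      by_cases h : G.Adj u v
      · have hmem : s(u, v) ∈ G.edgeFinset := by
          rw [SimpleGraph.mem_edgeFinset, SimpleGraph.mem_edgeSet]; exact h
        simp only [hcoefdef, hBdef, hAdef, hfdef]
        simp [h, hmem]
      · simp only [hcoefdef, hBdef, hAdef, hfdef]
        simp [h]
    have h2 : ∑ e ∈ G.edgeFinset, f e
        = ∑ e : {e : Sym2 V // e ∈ G.edgeFinset}, c e.1 * x e := by
      rw [Finset.sum_subtype G.edgeFinset (fun _ => Iff.rfl) f]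
      refine Finset.sum_congr rfl fun e _ => ?_
      simp only [hfdef]
      rw [dif_pos e.2]
    rw [h1, double_count, h2]
  have hPentry : ∀ (τ : Equiv.Perm (V ⊕ V)) (i j : V ⊕ V),
      (τ.permMatrix ℝ) i j = if τ i = j then 1 else 0 := by
    intro τ i j
    simp only [Equiv.Perm.permMatrix, PEquiv.toMatrix_apply, Equiv.toPEquiv_apply,
      Option.mem_def, Option.some_inj]
  have hPnn : ∀ (τ : Equiv.Perm (V ⊕ V)) (i j : V ⊕ V), 0 ≤ (τ.permMatrix ℝ) i j := by
    intro τ i j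
    rw [hPentry]
    split <;> norm_num
  have hLsum : L B = ∑ τ : Equiv.Perm (V ⊕ V), w τ * L (τ.permMatrix ℝ) := by
    rw [← hwB, map_sum]
    exact Finset.sum_congr rfl fun τ _ => by rw [map_smul, smul_eq_mul]
  obtain ⟨σ, hσpos, hσL⟩ : ∃ σ : Equiv.Perm (V ⊕ V), 0 < w σ ∧ L B ≤ L (σ.permMatrix ℝ) := by
    by_contra h
    push_neg at h
    obtain ⟨σ0, hσ0⟩ : ∃ σ : Equiv.Perm (V ⊕ V), 0 < w σ := by
      by_contra h2
      push_neg at h2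
      have hz : ∀ τ : Equiv.Perm (V ⊕ V), w τ = 0 :=
        fun τ => le_antisymm (h2 τ) (hw0 τ)
      rw [Finset.sum_congr rfl (fun τ _ => hz τ)] at hw1
      simp at hw1
    have hlt : ∑ τ : Equiv.Perm (V ⊕ V), w τ * L (τ.permMatrix ℝ)
        < ∑ τ : Equiv.Perm (V ⊕ V), w τ * L B := by
      refine Finset.sum_lt_sum (fun τ _ => ?_) ⟨σ0, Finset.mem_univ _, ?_⟩
      · rcases eq_or_lt_of_le (hw0 τ) with heq | hpos
        · rw [← heq]; simp
        · exact le_of_lt (mul_lt_mul_of_pos_left (h τ hpos) hpos)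
      · exact mul_lt_mul_of_pos_left (h σ0 hσ0) hσ0
    rw [← hLsum, ← Finset.sum_mul, hw1, one_mul] at hlt
    exact lt_irrefl _ hlt
  have hsupp : ∀ i j, B i j = 0 → (σ.permMatrix ℝ) i j = 0 := by
    intro i j hBij
    have hform : B i j = ∑ τ : Equiv.Perm (V ⊕ V), w τ * (τ.permMatrix ℝ) i j := by
      rw [← hwB, Matrix.sum_apply]
      exact Finset.sum_congr rfl fun τ _ => by rw [Matrix.smul_apply, smul_eq_mul]
    rw [hform] at hBij
    have hterm := (Finset.sum_eq_zero_iff_of_nonneg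
      (fun τ _ => mul_nonneg (hw0 τ) (hPnn τ i j))).1 hBij σ (Finset.mem_univ _)
    rcases mul_eq_zero.1 hterm with h | h
    · exact absurd h (ne_of_gt hσpos)
    · exact h
  set P : Finset (V × V) := univ.filter (fun p => σ (Sum.inl p.1) = Sum.inr p.2) with hPdef
  have hadjP : ∀ p ∈ P, G.Adj p.1 p.2 := by
    intro p hp
    have hσp : σ (Sum.inl p.1) = Sum.inr p.2 := (Finset.mem_filter.1 hp).2
    by_contra hadj
    have hA0' : A p.1 p.2 = 0 := by simp only [hAdef]; rw [dif_neg hadj]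
    have hB0 : B (Sum.inl p.1) (Sum.inr p.2) = 0 := by
      simp only [hBdef]
      exact hA0'
    have hps := hsupp (Sum.inl p.1) (Sum.inr p.2) hB0
    rw [hPentry, if_pos hσp] at hps
    norm_num at hps
  have hfunP : ∀ p ∈ P, ∀ q ∈ P, p.1 = q.1 → p = q := by
    intro p hp q hq h1
    have hp2 := (Finset.mem_filter.1 hp).2
    have hq2 := (Finset.mem_filter.1 hq).2
    have : (Sum.inr p.2 : V ⊕ V) = Sum.inr q.2 := by rw [← hp2, ← hq2, h1]
    exact Prod.ext h1 (Sum.inr.inj this)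
  have hinjP : ∀ p ∈ P, ∀ q ∈ P, p.2 = q.2 → p = q := by
    intro p hp q hq h2
    have hp2 := (Finset.mem_filter.1 hp).2
    have hq2 := (Finset.mem_filter.1 hq).2
    have hσσ : σ (Sum.inl p.1) = σ (Sum.inl q.1) := by rw [hp2, hq2, h2]
    exact Prod.ext (Sum.inl.inj (σ.injective hσσ)) h2
  have hLP : L (σ.permMatrix ℝ) = ∑ p ∈ P, c s(p.1, p.2) := by
    simp only [hLdef, LinearMap.coe_mk, AddHom.coe_mk]
    have hstep : ∑ u : V, ∑ v : V, coef u v * (σ.permMatrix ℝ) (Sum.inl u) (Sum.inr v)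
        = ∑ p : V × V, (if σ (Sum.inl p.1) = Sum.inr p.2 then coef p.1 p.2 else 0) := by
      rw [Fintype.sum_prod_type]
      refine Finset.sum_congr rfl fun u _ => Finset.sum_congr rfl fun v _ => ?_
      rw [hPentry, mul_ite, mul_one, mul_zero]
    rw [hstep, ← Finset.sum_filter]
    refine Finset.sum_congr rfl fun p hp => ?_
    simp only [hcoefdef]
    rw [if_pos (hadjP p hp)]
  obtain ⟨M, hM1, hM2, hM3⟩ := exists_matching_third G c P hadjP (three_coloring P hfunP hinjP)
  refine ⟨M, hM1, hM2, ?_⟩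
  have hchain : 2 * ∑ e : {e : Sym2 V // e ∈ G.edgeFinset}, c e.1 * x e ≤ 3 * ∑ e ∈ M, c e := by
    calc 2 * ∑ e : {e : Sym2 V // e ∈ G.edgeFinset}, c e.1 * x e = L B := hLB.symm
      _ ≤ L (σ.permMatrix ℝ) := hσL
      _ = ∑ p ∈ P, c s(p.1, p.2) := hLP
      _ ≤ 3 * ∑ e ∈ M, c e := hM3
  linarith


/-- For every finite simple graph `G` and every fractional matching `x` of `G`, the
vector `(2/3)·x` lies in the matching polytope of `G`; consequently, for any
nonnegative profits `c` there exists a matching `M` of `G` with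
`Σ_{e ∈ M} c_e ≥ (2/3) Σ_{e ∈ E} c_e x_e`. -/
theorem two_thirds_fractional_matching_in_matching_polytope
    {V : Type*} [Fintype V] [DecidableEq V]
    (G : SimpleGraph V) [DecidableRel G.Adj]
    (x : {e : Sym2 V // e ∈ G.edgeFinset} → ℝ)
    (hx0 : ∀ e, 0 ≤ x e) (hx1 : ∀ e, x e ≤ 1)
    (hxdeg : ∀ v : V,
      ∑ e : {e : Sym2 V // e ∈ G.edgeFinset}, (if v ∈ e.1 then x e else 0) ≤ 1) :
    ((fun e => (2 / 3) * x e) ∈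
      convexHull ℝ {χ : {e : Sym2 V // e ∈ G.edgeFinset} → ℝ |
        ∃ M : Finset (Sym2 V), M ⊆ G.edgeFinset ∧
          (∀ e ∈ M, ∀ f ∈ M, e ≠ f → ∀ v : V, v ∈ e → v ∉ f) ∧
          χ = fun e => if e.1 ∈ M then 1 else 0}) ∧
    ∀ c : Sym2 V → ℝ, (∀ e ∈ G.edgeFinset, 0 ≤ c e) →
      ∃ M : Finset (Sym2 V), M ⊆ G.edgeFinset ∧
        (∀ e ∈ M, ∀ f ∈ M, e ≠ f → ∀ v : V, v ∈ e → v ∉ f) ∧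
        (2 / 3) * ∑ e : {e : Sym2 V // e ∈ G.edgeFinset}, c e.1 * x e ≤ ∑ e ∈ M, c e := by
  classical
  refine ⟨?_, fun c _ => key_lemma G x hx0 hxdeg c⟩
  set S : Set ({e : Sym2 V // e ∈ G.edgeFinset} → ℝ) :=
    {χ : {e : Sym2 V // e ∈ G.edgeFinset} → ℝ |
        ∃ M : Finset (Sym2 V), M ⊆ G.edgeFinset ∧
          (∀ e ∈ M, ∀ f ∈ M, e ≠ f → ∀ v : V, v ∈ e → v ∉ f) ∧
          χ = fun e => if e.1 ∈ M then 1 else 0} with hSdef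
  by_contra hout
  have hSfin : S.Finite := by
    apply Set.Finite.subset (Set.finite_range
      (fun M : Finset (Sym2 V) =>
        (fun e : {e : Sym2 V // e ∈ G.edgeFinset} => if e.1 ∈ M then (1 : ℝ) else 0)))
    rintro χ ⟨M, -, -, rfl⟩
    exact ⟨M, rfl⟩
  obtain ⟨f, u, hfS, hfp⟩ := geometric_hahn_banach_closed_point
    (convex_convexHull ℝ S) (hSfin.isClosed_convexHull ℝ) hout
  set c' : {e : Sym2 V // e ∈ G.edgeFinset} → ℝ := fun e => f (Pi.single e 1) with hc'
  have hrepr : ∀ y : {e : Sym2 V // e ∈ G.edgeFinset} → ℝ,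
      f y = ∑ e : {e : Sym2 V // e ∈ G.edgeFinset}, y e * c' e := by
    intro y
    conv_lhs => rw [← Finset.univ_sum_single y]
    rw [map_sum]
    refine Finset.sum_congr rfl fun e _ => ?_
    have hs : (Pi.single e (y e) : {e : Sym2 V // e ∈ G.edgeFinset} → ℝ)
        = (y e) • (Pi.single e (1 : ℝ) : {e : Sym2 V // e ∈ G.edgeFinset} → ℝ) := by
      rw [← Pi.single_smul, smul_eq_mul, mul_one]
    rw [hs, map_smul, smul_eq_mul]
  set ch : Sym2 V → ℝ := fun e => if h : e ∈ G.edgeFinset then c' ⟨e, h⟩ else 0 with hch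
  have hch' : ∀ e : {e : Sym2 V // e ∈ G.edgeFinset}, ch e.1 = c' e := by
    intro e
    simp only [hch]
    rw [dif_pos e.2]
  obtain ⟨M, hM1, hM2, hM3⟩ := key_lemma G x hx0 hxdeg ch
  have hχS : (fun e : {e : Sym2 V // e ∈ G.edgeFinset} => if e.1 ∈ M then (1:ℝ) else 0) ∈ S :=
    ⟨M, hM1, hM2, rfl⟩
  have hχhull := subset_convexHull ℝ S hχS
  have hMsum : ∑ e ∈ M, ch e
      = ∑ e : {e : Sym2 V // e ∈ G.edgeFinset}, (if e.1 ∈ M then ch e.1 else 0) := by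
    rw [← Finset.sum_subtype G.edgeFinset (fun _ => Iff.rfl)
      (fun e => if e ∈ M then ch e else 0)]
    rw [Finset.sum_ite_mem, Finset.inter_eq_right.2 hM1]
  have hfχ : f (fun e : {e : Sym2 V // e ∈ G.edgeFinset} => if e.1 ∈ M then (1:ℝ) else 0)
      = ∑ e ∈ M, ch e := by
    rw [hrepr, hMsum]
    refine Finset.sum_congr rfl fun e _ => ?_
    rw [hch']
    split <;> simp
  have hfp' : f (fun e => (2 / 3) * x e)
      = (2 / 3) * ∑ e : {e : Sym2 V // e ∈ G.edgeFinset}, ch e.1 * x e := by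
    rw [hrepr, Finset.mul_sum]
    refine Finset.sum_congr rfl fun e _ => ?_
    rw [hch']
    ring
  have h1 := hfS _ hχhull
  rw [hfχ] at h1
  rw [hfp'] at hfp
  linarith
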